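/- Let A and B be n×n nonnegative real matrices with the same sign pattern, i.e. for all i, j: A_{ij} = 0 if and only if B_{ij} = 0. Then A has Property 1 if and only if B has Property 1. -/

import Mathlib

open Matrix

/-- Spectral radius of a real square matrix: the maximum modulus of its complex
eigenvalues. -/
noncomputable def specRad {n : ℕ} (A : Matrix (Fin n) (Fin n) ℝ) : ℝ :=
  sSup {x : ℝ | ∃ μ ∈ spectrum ℂ (A.map Complex.ofReal), x = ‖μ‖}

/-- A nonnegative matrix is irreducible if for every pair (i,j) some power has a
positive (i,j) entry. -/
def MatIrred {n : ℕ} (A : Matrix (Fin n) (Fin n) ℝ) : Prop :=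
  ∀ i j : Fin n, ∃ m : ℕ, 0 < m ∧ 0 < (A ^ m) i j

/-- For a real diagonal matrix D = diag d, `expDiag d` is diag (exp d). -/
noncomputable def expDiag {n : ℕ} (d : Fin n → ℝ) : Matrix (Fin n) (Fin n) ℝ :=
  Matrix.diagonal fun i => Real.exp (d i)

/-- Property 1: equality in the log-convexity inequality forces C - D to be scalar. -/
def Property1 {n : ℕ} (A : Matrix (Fin n) (Fin n) ℝ) : Prop :=
  ∀ C D : Fin n → ℝ, ∀ t ∈ Set.Ioo (0:ℝ) 1,
    Real.log (specRad (expDiag (fun i => (1 - t) * C i + t * D i) * A)) =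
      (1 - t) * Real.log (specRad (expDiag C * A)) +
        t * Real.log (specRad (expDiag D * A)) →
    ∃ c : ℝ, ∀ i, C i - D i = c

namespace SRA
variable {n : ℕ}

def Nonneg (M : Matrix (Fin n) (Fin n) ℝ) : Prop := ∀ i j, 0 ≤ M i j

lemma sum_pos_iff {f : Fin n → ℝ} (hf : ∀ i, 0 ≤ f i) :
    (0 < ∑ i, f i) ↔ ∃ i, 0 < f i := by
  constructor
  · intro h
    by_contra h'
    push_neg at h'
    have : ∑ i, f i = 0 := Finset.sum_eq_zero fun i _ => le_antisymm (h' i) (hf i)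
    rw [this] at h; exact lt_irrefl 0 h
  · rintro ⟨i, hi⟩
    calc (0:ℝ) < f i := hi
      _ ≤ ∑ j, f j := Finset.single_le_sum (fun j _ => hf j) (Finset.mem_univ i)

lemma Nonneg.mul {M N : Matrix (Fin n) (Fin n) ℝ} (hM : Nonneg M) (hN : Nonneg N) :
    Nonneg (M * N) := fun i j => by
  rw [Matrix.mul_apply]
  exact Finset.sum_nonneg fun k _ => mul_nonneg (hM i k) (hN k j)

lemma Nonneg.pow {M : Matrix (Fin n) (Fin n) ℝ} (hM : Nonneg M) (m : ℕ) : Nonneg (M ^ m) := by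
  induction m with
  | zero => intro i j; rw [pow_zero]; by_cases h : i = j <;> simp [Matrix.one_apply, h]
  | succ k ih => rw [pow_succ]; exact ih.mul hM

lemma mul_pos_iff_nn {a b : ℝ} (ha : 0 ≤ a) (hb : 0 ≤ b) : 0 < a * b ↔ 0 < a ∧ 0 < b := by
  rw [mul_pos_iff]
  constructor
  · rintro (h | ⟨h1, h2⟩)
    · exact h
    · exact absurd h1 (not_lt.mpr ha)
  · exact Or.inl

/-- positivity pattern of powers only depends on positivity pattern -/
lemma pow_pos_iff_pattern {M N : Matrix (Fin n) (Fin n) ℝ} (hM : Nonneg M) (hN : Nonneg N)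
    (hpat : ∀ i j, 0 < M i j ↔ 0 < N i j) (m : ℕ) :
    ∀ i j, 0 < (M ^ m) i j ↔ 0 < (N ^ m) i j := by
  induction m with
  | zero => intro i j; rw [pow_zero, pow_zero]
  | succ k ih =>
    intro i j
    rw [pow_succ', pow_succ', Matrix.mul_apply, Matrix.mul_apply,
      sum_pos_iff (fun l => mul_nonneg (hM i l) ((hM.pow k) l j)),
      sum_pos_iff (fun l => mul_nonneg (hN i l) ((hN.pow k) l j))]
    constructor
    · rintro ⟨l, hl⟩
      rw [mul_pos_iff_nn (hM i l) ((hM.pow k) l j)] at hl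
      exact ⟨l, mul_pos ((hpat i l).mp hl.1) ((ih l j).mp hl.2)⟩
    · rintro ⟨l, hl⟩
      rw [mul_pos_iff_nn (hN i l) ((hN.pow k) l j)] at hl
      exact ⟨l, mul_pos ((hpat i l).mpr hl.1) ((ih l j).mpr hl.2)⟩

lemma matIrred_of_pattern {M N : Matrix (Fin n) (Fin n) ℝ} (hM : Nonneg M) (hN : Nonneg N)
    (hpat : ∀ i j, 0 < M i j ↔ 0 < N i j) (h : MatIrred M) : MatIrred N := fun i j => by
  obtain ⟨m, hm, hpos⟩ := h i j
  exact ⟨m, hm, (pow_pos_iff_pattern hM hN hpat m i j).mp hpos⟩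

lemma expDiag_mul_apply (d : Fin n → ℝ) (M : Matrix (Fin n) (Fin n) ℝ) (i j : Fin n) :
    (expDiag d * M) i j = Real.exp (d i) * M i j := by
  rw [expDiag, Matrix.diagonal_mul]

lemma Nonneg.expDiag_mul {M : Matrix (Fin n) (Fin n) ℝ} (hM : Nonneg M) (d : Fin n → ℝ) :
    Nonneg (expDiag d * M) := fun i j => by
  rw [expDiag_mul_apply]; exact mul_nonneg (Real.exp_pos _).le (hM i j)

lemma expDiag_pattern {M : Matrix (Fin n) (Fin n) ℝ} (hM : Nonneg M) (d : Fin n → ℝ) :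
    ∀ i j, 0 < (expDiag d * M) i j ↔ 0 < M i j := fun i j => by
  rw [expDiag_mul_apply, mul_pos_iff_nn (Real.exp_pos _).le (hM i j)]
  exact ⟨fun h => h.2, fun h => ⟨Real.exp_pos _, h⟩⟩

/-- every row of an irreducible matrix is nonzero -/
lemma row_ne_zero_of_irred {M : Matrix (Fin n) (Fin n) ℝ} (hM : Nonneg M) (h : MatIrred M)
    (i : Fin n) : ∃ j, 0 < M i j := by
  by_contra hrow
  push_neg at hrow
  have hrow0 : ∀ j, M i j = 0 := fun j => le_antisymm (hrow j) (hM i j)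
  obtain ⟨m, hm, hpos⟩ := h i i
  have hz : ∀ k, 0 < k → ∀ j, (M ^ k) i j = 0 := by
    intro k hk
    induction k with
    | zero => omega
    | succ l _ =>
      intro j
      rw [pow_succ', Matrix.mul_apply]
      apply Finset.sum_eq_zero; intro x _; rw [hrow0 x, zero_mul]
  rw [hz m hm i] at hpos; exact lt_irrefl 0 hpos

lemma mul_entry_le_mul {X Y Z W : Matrix (Fin n) (Fin n) ℝ}
    (h1 : ∀ i j, 0 ≤ X i j) (h3 : ∀ i j, 0 ≤ Z i j)
    (hXY : ∀ i j, X i j ≤ Y i j) (hZW : ∀ i j, Z i j ≤ W i j) :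
    ∀ i j, (X * Z) i j ≤ (Y * W) i j := fun i j => by
  rw [Matrix.mul_apply, Matrix.mul_apply]
  refine Finset.sum_le_sum fun k _ => ?_
  exact mul_le_mul (hXY i k) (hZW k j) (h3 k j) (le_trans (h1 i k) (hXY i k))

/-- (1+M)^K has all entries positive for irreducible nonneg M -/
lemma one_add_pow_pos {M : Matrix (Fin n) (Fin n) ℝ} (hM : Nonneg M) (h : MatIrred M) :
    ∃ K : ℕ, ∀ i j, 0 < ((1 + M) ^ K : Matrix (Fin n) (Fin n) ℝ) i j := by
  classical
  choose f hf1 hf2 using h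
  set K := Finset.univ.sup (fun p : Fin n × Fin n => f p.1 p.2) with hK
  refine ⟨K, fun i j => ?_⟩
  have hfK : f i j ≤ K := Finset.le_sup (f := fun p : Fin n × Fin n => f p.1 p.2)
    (Finset.mem_univ (i, j))
  have hone : Nonneg (1 + M) := by
    intro a b
    rw [Matrix.add_apply]
    have h1 : (0:ℝ) ≤ (1 : Matrix (Fin n) (Fin n) ℝ) a b := by
      by_cases hab : a = b <;> simp [Matrix.one_apply, hab]
    exact add_nonneg h1 (hM a b)
  have hpow : ∀ k, Nonneg (((1 + M) : Matrix (Fin n) (Fin n) ℝ) ^ k) := hone.pow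
  have hsucc : ∀ (l : ℕ) a b, (((1 + M)) ^ (l+1) : Matrix (Fin n) (Fin n) ℝ) a b
      = ((1 + M) ^ l : Matrix (Fin n) (Fin n) ℝ) a b
        + (((1 + M) ^ l : Matrix (Fin n) (Fin n) ℝ) * M) a b := by
    intro l a b
    rw [pow_succ, Matrix.mul_add, Matrix.mul_one, Matrix.add_apply]
  have grow : ∀ p q, p ≤ q → ∀ a b,
      ((1 + M) ^ p : Matrix (Fin n) (Fin n) ℝ) a b ≤ ((1 + M) ^ q : Matrix (Fin n) (Fin n) ℝ) a b := by
    intro p q hpq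
    induction q with
    | zero =>
      intro a b
      have hp0 : p = 0 := by omega
      subst hp0; exact le_refl _
    | succ r ih =>
      intro a b
      by_cases hpr : p ≤ r
      · refine le_trans (ih hpr a b) ?_
        rw [hsucc r a b]
        linarith [((hpow r).mul hM) a b]
      · have : p = r + 1 := by omega
        subst this; exact le_refl _
  have hge1 : ∀ a b, (1 : Matrix (Fin n) (Fin n) ℝ) a b ≤ ((1 + M) ^ K : Matrix (Fin n) (Fin n) ℝ) a b := by
    intro a b
    have h0 : ((1 + M) ^ 0 : Matrix (Fin n) (Fin n) ℝ) a b = (1 : Matrix (Fin n) (Fin n) ℝ) a b := by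
      rw [pow_zero]
    rw [← h0]
    exact grow 0 K (Nat.zero_le K) a b
  have step1 : ∀ l a b, (M ^ l) a b ≤ ((1 + M) ^ l : Matrix (Fin n) (Fin n) ℝ) a b := by
    intro l
    induction l with
    | zero => intro a b; rw [pow_zero, pow_zero]
    | succ p ih =>
      intro a b
      rw [pow_succ, pow_succ]
      calc (M ^ p * M) a b ≤ (((1 + M) ^ p : Matrix (Fin n) (Fin n) ℝ) * M) a b :=
            mul_entry_le_mul (hM.pow p) hM ih (fun _ _ => le_refl _) a b
        _ ≤ (((1 + M) ^ p : Matrix (Fin n) (Fin n) ℝ) * (1 + M)) a b := by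
            rw [Matrix.mul_add, Matrix.mul_one, Matrix.add_apply]
            linarith [(hpow p) a b]
  by_cases hij : i = j
  · subst hij
    have h1 := hge1 i i
    rw [Matrix.one_apply_eq] at h1
    linarith
  · exact lt_of_lt_of_le (hf2 i j) (le_trans (step1 (f i j) i j) (grow (f i j) K hfK i j))


/-- eigenvector characterization of matrix spectrum over ℂ -/
lemma mem_spec_iff {N : Matrix (Fin n) (Fin n) ℂ} {μ : ℂ} :
    μ ∈ spectrum ℂ N ↔ ∃ z : Fin n → ℂ, z ≠ 0 ∧ N.mulVec z = μ • z := by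
  rw [spectrum.mem_iff]
  have halg : algebraMap ℂ (Matrix (Fin n) (Fin n) ℂ) μ = μ • (1 : Matrix (Fin n) (Fin n) ℂ) :=
    Algebra.algebraMap_eq_smul_one μ
  rw [halg, Matrix.isUnit_iff_isUnit_det, isUnit_iff_ne_zero, not_ne_iff,
    ← Matrix.exists_mulVec_eq_zero_iff]
  constructor
  · rintro ⟨v, hv0, hv⟩
    refine ⟨v, hv0, ?_⟩
    have : (μ • (1 : Matrix (Fin n) (Fin n) ℂ)).mulVec v - N.mulVec v = 0 := by
      rw [← Matrix.sub_mulVec]; exact hv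
    have h1 : (μ • (1 : Matrix (Fin n) (Fin n) ℂ)).mulVec v = μ • v := by
      rw [Matrix.smul_mulVec, Matrix.one_mulVec]
    rw [h1] at this
    exact (sub_eq_zero.mp this).symm
  · rintro ⟨v, hv0, hv⟩
    refine ⟨v, hv0, ?_⟩
    rw [Matrix.sub_mulVec, Matrix.smul_mulVec, Matrix.one_mulVec, hv, sub_self]

lemma specRad_nonneg (M : Matrix (Fin n) (Fin n) ℝ) : 0 ≤ specRad M := by
  apply Real.sSup_nonneg
  rintro x ⟨μ, _, rfl⟩
  exact norm_nonneg μ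

/-- crude uniform bound for moduli of eigenvalues -/
lemma abs_le_of_mem_spec {N : Matrix (Fin n) (Fin n) ℂ} {μ : ℂ}
    (h : μ ∈ spectrum ℂ N) : ‖μ‖ ≤ ∑ i, ∑ j, ‖N i j‖ := by
  obtain ⟨z, hz0, hz⟩ := mem_spec_iff.mp h
  obtain ⟨i1, hi1⟩ : ∃ i, z i ≠ 0 := by
    by_contra h'; push_neg at h'; exact hz0 (funext h')
  obtain ⟨i0, -, hi0⟩ := Finset.exists_max_image Finset.univ (fun i => ‖z i‖)
    ⟨i1, Finset.mem_univ i1⟩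
  have hzi0 : 0 < ‖z i0‖ :=
    lt_of_lt_of_le (norm_pos_iff.mpr hi1) (hi0 i1 (Finset.mem_univ i1))
  have key : ‖μ‖ * ‖z i0‖ ≤
      (∑ i, ∑ j, ‖N i j‖) * ‖z i0‖ := by
    have h1 : ‖μ * z i0‖ = ‖(N.mulVec z) i0‖ := by
      rw [hz]; simp [Pi.smul_apply, smul_eq_mul]
    rw [← norm_mul, h1]
    have h2 : ‖(N.mulVec z) i0‖ ≤ ∑ j, ‖N i0 j‖ * ‖z j‖ := by
      rw [Matrix.mulVec, dotProduct]
      refine le_trans (norm_sum_le _ _) ?_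
      apply le_of_eq; refine Finset.sum_congr rfl fun j _ => ?_
      exact norm_mul _ _
    refine le_trans h2 ?_
    have h3 : ∀ j ∈ Finset.univ, ‖N i0 j‖ * ‖z j‖ ≤
        ‖N i0 j‖ * ‖z i0‖ := fun j _ =>
      mul_le_mul_of_nonneg_left (hi0 j (Finset.mem_univ j)) (norm_nonneg _)
    refine le_trans (Finset.sum_le_sum h3) ?_
    rw [← Finset.sum_mul]
    apply mul_le_mul_of_nonneg_right _ (le_of_lt hzi0)
    apply Finset.single_le_sum (f := fun i => ∑ j, ‖N i j‖)
      (fun i _ => Finset.sum_nonneg fun j _ => norm_nonneg _) (Finset.mem_univ i0)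
  exact le_of_mul_le_mul_right key hzi0

lemma specSet_bddAbove (M : Matrix (Fin n) (Fin n) ℝ) :
    BddAbove {x : ℝ | ∃ μ ∈ spectrum ℂ (M.map Complex.ofReal), x = ‖μ‖} := by
  refine ⟨∑ i, ∑ j, ‖(M.map Complex.ofReal) i j‖, ?_⟩
  rintro x ⟨μ, hμ, rfl⟩
  exact abs_le_of_mem_spec hμ

lemma le_specRad {M : Matrix (Fin n) (Fin n) ℝ} {μ : ℂ}
    (h : μ ∈ spectrum ℂ (M.map Complex.ofReal)) : ‖μ‖ ≤ specRad M :=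
  le_csSup (specSet_bddAbove M) ⟨μ, h, rfl⟩

lemma specRad_le {M : Matrix (Fin n) (Fin n) ℝ} {a : ℝ} (ha : 0 ≤ a)
    (h : ∀ μ ∈ spectrum ℂ (M.map Complex.ofReal), ‖μ‖ ≤ a) : specRad M ≤ a :=
  Real.sSup_le (by rintro x ⟨μ, hμ, rfl⟩; exact h μ hμ) ha

/-- characterize specRad by an eigen-modulus that dominates -/
lemma specRad_eq {M : Matrix (Fin n) (Fin n) ℝ} {r : ℝ} (hr : 0 ≤ r)
    (hmem : (r : ℂ) ∈ spectrum ℂ (M.map Complex.ofReal))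
    (hdom : ∀ μ ∈ spectrum ℂ (M.map Complex.ofReal), ‖μ‖ ≤ r) :
    specRad M = r := by
  refine le_antisymm (specRad_le hr hdom) ?_
  have := le_specRad hmem
  rwa [Complex.norm_real, Real.norm_eq_abs, abs_of_nonneg hr] at this


lemma dot_mulVec_eq (M : Matrix (Fin n) (Fin n) ℝ) (v w : Fin n → ℝ) :
    ∑ i, v i * (M.mulVec w) i = ∑ j, (Mᵀ.mulVec v) j * w j := by
  simp only [Matrix.mulVec, dotProduct, Finset.mul_sum, Finset.sum_mul]
  rw [Finset.sum_comm]
  apply Finset.sum_congr rfl; intro j _; apply Finset.sum_congr rfl; intro i _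
  rw [Matrix.transpose_apply]; ring

lemma matIrred_transpose {M : Matrix (Fin n) (Fin n) ℝ} (h : MatIrred M) : MatIrred Mᵀ := by
  intro i j
  obtain ⟨m, hm, hpos⟩ := h j i
  refine ⟨m, hm, ?_⟩
  have : (Mᵀ ^ m) i j = (M ^ m) j i := by
    rw [← Matrix.transpose_pow, Matrix.transpose_apply]
  rw [this]; exact hpos

/-- Perron eigenpair existence -/
theorem perron_aux (hn : 0 < n) {M : Matrix (Fin n) (Fin n) ℝ}
    (hM : Nonneg M) (hirr : MatIrred M) :
    ∃ (r : ℝ) (u : Fin n → ℝ), 0 < r ∧ (∀ i, 0 < u i) ∧ M.mulVec u = r • u := by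
  classical
  haveI : Nonempty (Fin n) := ⟨⟨0, hn⟩⟩
  obtain ⟨K, hP⟩ := one_add_pow_pos hM hirr
  set P : Matrix (Fin n) (Fin n) ℝ := (1 + M) ^ K with hPdef
  have hPnn : Nonneg P := fun i j => (hP i j).le
  have hcomm : M * P = P * M := by
    have h1 : Commute M (1 + M) := (Commute.one_right M).add_right (Commute.refl M)
    exact (h1.pow_right K)
  set Δ : Set (Fin n → ℝ) := {y | (∀ i, 0 ≤ y i) ∧ ∑ i, y i = 1} with hΔdef
  have hΔne : Δ.Nonempty := by
    refine ⟨fun _ => (n : ℝ)⁻¹, fun i => by positivity, ?_⟩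
    rw [Finset.sum_const, Finset.card_univ, Fintype.card_fin, nsmul_eq_mul]
    exact mul_inv_cancel₀ (by positivity)
  have hclosed : IsClosed Δ := by
    have h1 : IsClosed {y : Fin n → ℝ | ∀ i, 0 ≤ y i} := by
      have : {y : Fin n → ℝ | ∀ i, 0 ≤ y i} = ⋂ i, {y | 0 ≤ y i} := by ext; simp [Set.mem_iInter]
      rw [this]
      exact isClosed_iInter fun i => isClosed_le continuous_const (continuous_apply i)
    have h2 : IsClosed {y : Fin n → ℝ | ∑ i, y i = 1} :=
      isClosed_eq (continuous_finset_sum _ fun i _ => continuous_apply i) continuous_const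
    exact h1.inter h2
  have hcompact : IsCompact Δ := by
    apply IsCompact.of_isClosed_subset (isCompact_univ_pi fun _ : Fin n => isCompact_Icc
      (a := (0:ℝ)) (b := 1)) hclosed
    rintro y ⟨hy0, hy1⟩ i _
    refine ⟨hy0 i, ?_⟩
    calc y i ≤ ∑ j, y j := Finset.single_le_sum (fun j _ => hy0 j) (Finset.mem_univ i)
      _ = 1 := hy1
  have hcmv : ∀ (N : Matrix (Fin n) (Fin n) ℝ), Continuous fun y : Fin n → ℝ => N.mulVec y := by
    intro N
    apply continuous_pi; intro i
    simp only [Matrix.mulVec, dotProduct]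
    exact continuous_finset_sum _ fun j _ => continuous_const.mul (continuous_apply j)
  have hPy : ∀ y ∈ Δ, ∀ i, 0 < (P.mulVec y) i := by
    rintro y ⟨hy0, hy1⟩ i
    obtain ⟨j0, hj0⟩ : ∃ j, 0 < y j := by
      by_contra h'; push_neg at h'
      have h0 : ∑ j, y j = 0 := Finset.sum_eq_zero fun j _ => le_antisymm (h' j) (hy0 j)
      rw [hy1] at h0; norm_num at h0
    have hrfl : (P.mulVec y) i = ∑ j, P i j * y j := rfl
    rw [hrfl]
    exact (sum_pos_iff fun j => mul_nonneg (hPnn i j) (hy0 j)).mpr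
      ⟨j0, mul_pos (hP i j0) hj0⟩
  set F : (Fin n → ℝ) → ℝ := fun y =>
    Finset.univ.inf' Finset.univ_nonempty
      (fun i => (M.mulVec (P.mulVec y)) i / (P.mulVec y) i) with hFdef
  have hcont : ContinuousOn F Δ := by
    apply ContinuousOn.finset_inf'_apply
    intro i _
    apply ContinuousOn.div
    · exact ((continuous_apply i).comp ((hcmv M).comp (hcmv P))).continuousOn
    · exact ((continuous_apply i).comp (hcmv P)).continuousOn
    · intro y hy; exact ne_of_gt (hPy y hy i)
  obtain ⟨ystar, hyΔ, hymax⟩ := hcompact.exists_isMaxOn hΔne hcont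
  set x : Fin n → ℝ := P.mulVec ystar with hxdef
  have hx : ∀ i, 0 < x i := hPy ystar hyΔ
  set r : ℝ := F ystar with hrdef
  have hrle : ∀ i, r * x i ≤ (M.mulVec x) i := by
    intro i
    have h1 : r ≤ (M.mulVec x) i / x i := Finset.inf'_le _ (Finset.mem_univ i)
    calc r * x i ≤ ((M.mulVec x) i / x i) * x i :=
          mul_le_mul_of_nonneg_right h1 (hx i).le
      _ = (M.mulVec x) i := div_mul_cancel₀ _ (ne_of_gt (hx i))
  have hMvpos : ∀ (w : Fin n → ℝ), (∀ i, 0 < w i) → ∀ i, 0 < (M.mulVec w) i := by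
    intro w hw i
    obtain ⟨j, hj⟩ := row_ne_zero_of_irred hM hirr i
    have hrfl : (M.mulVec w) i = ∑ k, M i k * w k := rfl
    rw [hrfl]
    exact (sum_pos_iff fun k => mul_nonneg (hM i k) (hw k).le).mpr ⟨j, mul_pos hj (hw j)⟩
  have hr0 : 0 < r := by
    rw [hrdef, hFdef]
    rw [Finset.lt_inf'_iff]
    intro i _
    exact div_pos (hMvpos x hx i) (hx i)
  -- eigen equality
  refine ⟨r, x, hr0, hx, ?_⟩
  by_contra hne'
  set z : Fin n → ℝ := M.mulVec x - r • x with hzdef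
  have hz0 : ∀ i, 0 ≤ z i := by
    intro i
    have : z i = (M.mulVec x) i - r * x i := rfl
    rw [this]; linarith [hrle i]
  have hznz : z ≠ 0 := by
    intro h0
    exact hne' (sub_eq_zero.mp h0)
  obtain ⟨j0, hj0⟩ : ∃ j, 0 < z j := by
    by_contra h'; push_neg at h'
    exact hznz (funext fun j => le_antisymm (h' j) (hz0 j))
  have hw : ∀ i, 0 < (P.mulVec z) i := by
    intro i
    have hrfl : (P.mulVec z) i = ∑ j, P i j * z j := rfl
    rw [hrfl]
    exact (sum_pos_iff fun j => mul_nonneg (hPnn i j) (hz0 j)).mpr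
      ⟨j0, mul_pos (hP i j0) hj0⟩
  set x' : Fin n → ℝ := P.mulVec x with hx'def
  have hx' : ∀ i, 0 < x' i := by
    intro i
    have hrfl : (x' : Fin n → ℝ) i = ∑ j, P i j * x j := rfl
    rw [hrfl]
    exact (sum_pos_iff fun j => mul_nonneg (hPnn i j) (hx j).le).mpr
      ⟨j0, mul_pos (hP i j0) (hx j0)⟩
  have hswap : ∀ w : Fin n → ℝ, M.mulVec (P.mulVec w) = P.mulVec (M.mulVec w) := by
    intro w
    rw [Matrix.mulVec_mulVec, Matrix.mulVec_mulVec, hcomm]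
  have hMx' : M.mulVec x' = r • x' + P.mulVec z := by
    have h4 : M.mulVec x = r • x + z := by rw [hzdef]; abel
    calc M.mulVec x' = P.mulVec (M.mulVec x) := hswap x
      _ = P.mulVec (r • x + z) := by rw [h4]
      _ = r • x' + P.mulVec z := by rw [Matrix.mulVec_add, Matrix.mulVec_smul]
  set ε : ℝ := Finset.univ.inf' Finset.univ_nonempty (fun i => (P.mulVec z) i / x' i) with hεdef
  have hε0 : 0 < ε := by
    rw [hεdef, Finset.lt_inf'_iff]
    intro i _
    exact div_pos (hw i) (hx' i)
  have hεle : ∀ i, ε * x' i ≤ (P.mulVec z) i := by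
    intro i
    have h1 : ε ≤ (P.mulVec z) i / x' i := Finset.inf'_le _ (Finset.mem_univ i)
    calc ε * x' i ≤ ((P.mulVec z) i / x' i) * x' i :=
          mul_le_mul_of_nonneg_right h1 (hx' i).le
      _ = (P.mulVec z) i := div_mul_cancel₀ _ (ne_of_gt (hx' i))
  have hdom : ∀ i, (r + ε) * x' i ≤ (M.mulVec x') i := by
    intro i
    have : (M.mulVec x') i = r * x' i + (P.mulVec z) i := by rw [hMx']; rfl
    rw [this]; ring_nf; linarith [hεle i]
  -- normalize x'
  set c : ℝ := (∑ i, x' i)⁻¹ with hcdef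
  have hsum : 0 < ∑ i, x' i := Finset.sum_pos (fun i _ => hx' i) Finset.univ_nonempty
  have hc : 0 < c := inv_pos.mpr hsum
  set y' : Fin n → ℝ := c • x' with hy'def
  have hy'Δ : y' ∈ Δ := by
    constructor
    · intro i; exact mul_nonneg hc.le (hx' i).le
    · have : ∑ i, (c • x') i = c * ∑ i, x' i := by
        rw [Finset.mul_sum]; rfl
      rw [hy'def, this, hcdef]
      exact inv_mul_cancel₀ (ne_of_gt hsum)
  -- F y' ≥ r + ε: contradiction
  have hFy' : r + ε ≤ F y' := by
    rw [hFdef]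
    rw [Finset.le_inf'_iff]
    intro i _
    set x'' : Fin n → ℝ := P.mulVec x' with hx''def
    have hx'' : ∀ i, 0 < x'' i := by
      intro i
      have hrfl : (x'' : Fin n → ℝ) i = ∑ j, P i j * x' j := rfl
      rw [hrfl]
      exact (sum_pos_iff fun j => mul_nonneg (hPnn i j) (hx' j).le).mpr
        ⟨j0, mul_pos (hP i j0) (hx' j0)⟩
    have hq : P.mulVec y' = c • x'' := by
      rw [hy'def, Matrix.mulVec_smul]
    have hMq : M.mulVec (P.mulVec y') = c • (M.mulVec x'') := by
      rw [hq, Matrix.mulVec_smul]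
    have hdom'' : ∀ i, (r + ε) * x'' i ≤ (M.mulVec x'') i := by
      intro i
      have h1 : (M.mulVec x'') i = (P.mulVec (M.mulVec x')) i := by
        rw [hx''def, hswap x']
      rw [h1]
      have h2 : (P.mulVec ((r + ε) • x')) i ≤ (P.mulVec (M.mulVec x')) i := by
        have hrfl1 : (P.mulVec ((r + ε) • x')) i = ∑ j, P i j * ((r + ε) * x' j) := rfl
        have hrfl2 : (P.mulVec (M.mulVec x')) i = ∑ j, P i j * (M.mulVec x') j := rfl
        rw [hrfl1, hrfl2]
        exact Finset.sum_le_sum fun j _ =>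
          mul_le_mul_of_nonneg_left (hdom j) (hPnn i j)
      have h3 : (P.mulVec ((r + ε) • x')) i = (r + ε) * x'' i := by
        rw [Matrix.mulVec_smul]; rfl
      linarith
    rw [hMq, hq]
    have hcc : (c • (M.mulVec x'')) i / (c • x'') i = (M.mulVec x'') i / x'' i := by
      have h1 : (c • (M.mulVec x'')) i = c * (M.mulVec x'') i := rfl
      have h2 : (c • x'') i = c * x'' i := rfl
      rw [h1, h2, mul_div_mul_left _ _ (ne_of_gt hc)]
    rw [hcc]
    rw [le_div_iff₀ (hx'' i)]
    linarith [hdom'' i]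
  have := hymax hy'Δ
  have hle : F y' ≤ r := this
  linarith

/-- Full Perron–Frobenius package -/
theorem perron (hn : 0 < n) {M : Matrix (Fin n) (Fin n) ℝ}
    (hM : Nonneg M) (hirr : MatIrred M) :
    ∃ (r : ℝ) (u v : Fin n → ℝ), 0 < r ∧ (∀ i, 0 < u i) ∧ (∀ i, 0 < v i) ∧
      M.mulVec u = r • u ∧ Mᵀ.mulVec v = r • v ∧ specRad M = r := by
  obtain ⟨r, u, hr, hu, heig⟩ := perron_aux hn hM hirr
  have hMT : Nonneg Mᵀ := fun i j => hM j i
  obtain ⟨s, v, hs, hv, heigT⟩ := perron_aux hn hMT (matIrred_transpose hirr)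
  haveI : Nonempty (Fin n) := ⟨⟨0, hn⟩⟩
  have hsum_vu : 0 < ∑ i, v i * u i :=
    Finset.sum_pos (fun i _ => mul_pos (hv i) (hu i)) Finset.univ_nonempty
  have hrs : r = s := by
    have h1 : ∑ i, v i * (M.mulVec u) i = r * ∑ i, v i * u i := by
      rw [heig]
      rw [Finset.mul_sum]
      apply Finset.sum_congr rfl; intro i _
      have : (r • u) i = r * u i := rfl
      rw [this]; ring
    have h2 : ∑ i, v i * (M.mulVec u) i = s * ∑ i, v i * u i := by
      rw [dot_mulVec_eq, heigT]
      rw [Finset.mul_sum]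
      apply Finset.sum_congr rfl; intro i _
      have : (s • v) i = s * v i := rfl
      rw [this]; ring
    have := h1.symm.trans h2
    exact mul_right_cancel₀ (ne_of_gt hsum_vu) this
  subst hrs
  refine ⟨r, u, v, hr, hu, hv, heig, heigT, ?_⟩
  apply specRad_eq hr.le
  · -- membership
    apply mem_spec_iff.mpr
    refine ⟨fun i => (u i : ℂ), ?_, ?_⟩
    · intro h0
      have := congrFun h0 ⟨0, hn⟩
      simp only [Pi.zero_apply, Complex.ofReal_eq_zero] at this
      exact ne_of_gt (hu ⟨0, hn⟩) this
    · funext i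
      have h1 : ((M.map Complex.ofReal).mulVec fun i => (u i : ℂ)) i
          = ((M.mulVec u) i : ℂ) := by
        simp only [Matrix.mulVec, dotProduct, Matrix.map_apply]
        push_cast
        rfl
      rw [h1, heig]
      have : (r • u) i = r * u i := rfl
      rw [this]
      push_cast
      rfl
  · -- dominance
    intro μ hμ
    obtain ⟨z, hz0, hz⟩ := mem_spec_iff.mp hμ
    set xab : Fin n → ℝ := fun i => ‖z i‖ with hxab
    have hxabnn : ∀ i, 0 ≤ xab i := fun i => norm_nonneg _
    obtain ⟨i1, hi1⟩ : ∃ i, z i ≠ 0 := by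
      by_contra h'; push_neg at h'; exact hz0 (funext h')
    have hpoint : ∀ i, ‖μ‖ * xab i ≤ (M.mulVec xab) i := by
      intro i
      have h1 : ‖μ‖ * xab i = ‖μ * z i‖ := by
        rw [norm_mul]
      have h2 : μ * z i = ((M.map Complex.ofReal).mulVec z) i := by
        rw [hz]; rfl
      rw [h1, h2]
      have h3 : ((M.map Complex.ofReal).mulVec z) i = ∑ j, (M i j : ℂ) * z j := by
        simp only [Matrix.mulVec, dotProduct, Matrix.map_apply]
      rw [h3]
      refine le_trans (norm_sum_le _ _) ?_
      have hrfl : (M.mulVec xab) i = ∑ j, M i j * xab j := rfl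
      rw [hrfl]
      apply le_of_eq
      apply Finset.sum_congr rfl; intro j _
      rw [norm_mul, Complex.norm_real, Real.norm_eq_abs, abs_of_nonneg (hM i j)]
    -- dot with v
    have hd1 : ∑ i, v i * (‖μ‖ * xab i) ≤ ∑ i, v i * (M.mulVec xab) i :=
      Finset.sum_le_sum fun i _ => mul_le_mul_of_nonneg_left (hpoint i) (hv i).le
    have hd2 : ∑ i, v i * (M.mulVec xab) i = r * ∑ i, v i * xab i := by
      rw [dot_mulVec_eq, heigT]
      rw [Finset.mul_sum]
      apply Finset.sum_congr rfl; intro i _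
      have : (r • v) i = r * v i := rfl
      rw [this]; ring
    have hd3 : ∑ i, v i * (‖μ‖ * xab i) = ‖μ‖ * ∑ i, v i * xab i := by
      rw [Finset.mul_sum]
      apply Finset.sum_congr rfl; intro i _; ring
    have hsx : 0 < ∑ i, v i * xab i := by
      apply (sum_pos_iff fun i => mul_nonneg (hv i).le (hxabnn i)).mpr
      exact ⟨i1, mul_pos (hv i1) (norm_pos_iff.mpr hi1)⟩
    have : ‖μ‖ * ∑ i, v i * xab i ≤ r * ∑ i, v i * xab i := by
      rw [← hd3, ← hd2]; exact hd1
    exact le_of_mul_le_mul_right (by linarith [this]) hsx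


lemma map_mul_ofReal (X Y : Matrix (Fin n) (Fin n) ℝ) :
    (X * Y).map Complex.ofReal = X.map Complex.ofReal * Y.map Complex.ofReal := by
  ext i j
  simp only [Matrix.map_apply, Matrix.mul_apply]
  push_cast
  rfl

lemma map_one_ofReal : ((1 : Matrix (Fin n) (Fin n) ℝ)).map Complex.ofReal = 1 := by
  ext i j
  by_cases h : i = j <;> simp [Matrix.map_apply, Matrix.one_apply, h]

lemma map_smul_ofReal (c : ℝ) (X : Matrix (Fin n) (Fin n) ℝ) :
    ((c • X)).map Complex.ofReal = (c : ℂ) • (X.map Complex.ofReal) := by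
  ext i j
  simp [Matrix.map_apply]

/-- spectrum of a positive scalar multiple -/
lemma spec_smul {c : ℝ} (hc : c ≠ 0) (N : Matrix (Fin n) (Fin n) ℂ) (μ : ℂ) :
    μ ∈ spectrum ℂ ((c : ℂ) • N) ↔ ∃ ν ∈ spectrum ℂ N, μ = (c : ℂ) * ν := by
  constructor
  · intro h
    obtain ⟨z, hz0, hz⟩ := mem_spec_iff.mp h
    have hcc : (c : ℂ) ≠ 0 := by exact_mod_cast hc
    refine ⟨μ / c, ?_, by field_simp⟩
    apply mem_spec_iff.mpr
    refine ⟨z, hz0, ?_⟩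
    have h1 : ((c:ℂ) • N).mulVec z = (c:ℂ) • N.mulVec z := by
      rw [Matrix.smul_mulVec]
    rw [h1] at hz
    funext i
    have := congrFun hz i
    simp only [Pi.smul_apply, smul_eq_mul] at this ⊢
    field_simp
    rw [mul_comm] at this
    linear_combination this
  · rintro ⟨ν, hν, rfl⟩
    obtain ⟨z, hz0, hz⟩ := mem_spec_iff.mp hν
    apply mem_spec_iff.mpr
    refine ⟨z, hz0, ?_⟩
    rw [Matrix.smul_mulVec, hz, smul_smul]

lemma specRad_smul {c : ℝ} (hc : 0 < c) (M : Matrix (Fin n) (Fin n) ℝ) :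
    specRad (c • M) = c * specRad M := by
  have hmap : (c • M).map Complex.ofReal = (c : ℂ) • (M.map Complex.ofReal) :=
    map_smul_ofReal c M
  apply le_antisymm
  · apply specRad_le (mul_nonneg hc.le (specRad_nonneg M))
    intro μ hμ
    rw [hmap] at hμ
    obtain ⟨ν, hν, rfl⟩ := (spec_smul (ne_of_gt hc) _ μ).mp hμ
    rw [norm_mul, Complex.norm_real, Real.norm_eq_abs, abs_of_pos hc]
    exact mul_le_mul_of_nonneg_left (le_specRad hν) hc.le
  · have h2 : specRad M ≤ c⁻¹ * specRad (c • M) := by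
      apply specRad_le (mul_nonneg (inv_pos.mpr hc).le (specRad_nonneg _))
      intro ν hν
      have : (c : ℂ) * ν ∈ spectrum ℂ ((c • M).map Complex.ofReal) := by
        rw [hmap]
        exact (spec_smul (ne_of_gt hc) _ _).mpr ⟨ν, hν, rfl⟩
      have h3 := le_specRad this
      rw [norm_mul, Complex.norm_real, Real.norm_eq_abs, abs_of_pos hc] at h3
      calc ‖ν‖ = c⁻¹ * (c * ‖ν‖) := by field_simp
        _ ≤ c⁻¹ * specRad (c • M) :=
            mul_le_mul_of_nonneg_left h3 (inv_pos.mpr hc).le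
    calc c * specRad M ≤ c * (c⁻¹ * specRad (c • M)) :=
          mul_le_mul_of_nonneg_left h2 hc.le
      _ = specRad (c • M) := by field_simp

/-- conjugation invariance -/
lemma specRad_conj {U V M : Matrix (Fin n) (Fin n) ℝ} (hUV : U * V = 1) (hVU : V * U = 1) :
    specRad (U * M * V) = specRad M := by
  have key : ∀ (X Y W : Matrix (Fin n) (Fin n) ℝ), X * Y = 1 → Y * X = 1 →
      spectrum ℂ ((X * W * Y).map Complex.ofReal) ⊆ spectrum ℂ (W.map Complex.ofReal) := by
    intro X Y W hXY hYX μ hμ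
    obtain ⟨z, hz0, hz⟩ := mem_spec_iff.mp hμ
    rw [map_mul_ofReal, map_mul_ofReal] at hz
    set XC := X.map Complex.ofReal
    set YC := Y.map Complex.ofReal
    set WC := W.map Complex.ofReal
    have hYX' : YC * XC = 1 := by
      rw [← map_mul_ofReal, hYX, map_one_ofReal]
    have hXY' : XC * YC = 1 := by
      rw [← map_mul_ofReal, hXY, map_one_ofReal]
    apply mem_spec_iff.mpr
    refine ⟨YC.mulVec z, ?_, ?_⟩
    · intro h0
      apply hz0
      have : XC.mulVec (YC.mulVec z) = 0 := by rw [h0, Matrix.mulVec_zero]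
      rw [Matrix.mulVec_mulVec, hXY', Matrix.one_mulVec] at this
      exact this
    · have h2 : YC.mulVec ((XC * WC * YC).mulVec z) = ((YC * (XC * WC * YC))).mulVec z := by
        rw [Matrix.mulVec_mulVec]
      have h3 : YC * (XC * WC * YC) = WC * YC := by
        rw [mul_assoc XC WC YC, ← mul_assoc YC XC (WC * YC), hYX', one_mul]
      calc WC.mulVec (YC.mulVec z) = (WC * YC).mulVec z := by rw [Matrix.mulVec_mulVec]
        _ = YC.mulVec ((XC * WC * YC).mulVec z) := by rw [h2, h3]
        _ = YC.mulVec (μ • z) := by rw [hz]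
        _ = μ • YC.mulVec z := by rw [Matrix.mulVec_smul]
  have hsub1 : spectrum ℂ ((U * M * V).map Complex.ofReal) ⊆ spectrum ℂ (M.map Complex.ofReal) :=
    key U V M hUV hVU
  have hsub2 : spectrum ℂ (M.map Complex.ofReal) ⊆ spectrum ℂ ((U * M * V).map Complex.ofReal) := by
    have hM' : V * (U * M * V) * U = M := by
      have hassoc : V * (U * M * V) * U = (V * U) * M * (V * U) := by noncomm_ring
      rw [hassoc, hVU, one_mul, mul_one]
    have hk := key V U (U * M * V) hVU hUV
    rw [hM'] at hk
    exact hk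
  have hset : spectrum ℂ ((U * M * V).map Complex.ofReal) = spectrum ℂ (M.map Complex.ofReal) :=
    le_antisymm hsub1 hsub2
  unfold specRad
  rw [hset]

lemma expDiag_mul_expDiag (a b : Fin n → ℝ) : expDiag a * expDiag b = expDiag (a + b) := by
  simp only [expDiag, Matrix.diagonal_mul_diagonal, Pi.add_apply, Real.exp_add]

lemma expDiag_inv (a : Fin n → ℝ) : expDiag a * expDiag (-a) = 1 ∧ expDiag (-a) * expDiag a = 1 := by
  constructor
  · rw [expDiag_mul_expDiag, add_neg_cancel]
    unfold expDiag
    simp [Matrix.diagonal_one]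
  · rw [expDiag_mul_expDiag, neg_add_cancel]
    unfold expDiag
    simp [Matrix.diagonal_one]

/-- spectrum membership via determinant -/
lemma spec_iff_det {N : Matrix (Fin n) (Fin n) ℂ} {μ : ℂ} :
    μ ∈ spectrum ℂ N ↔ (μ • (1 : Matrix (Fin n) (Fin n) ℂ) - N).det = 0 := by
  rw [spectrum.mem_iff, Algebra.algebraMap_eq_smul_one, Matrix.isUnit_iff_isUnit_det,
    isUnit_iff_ne_zero, not_ne_iff]

/-- determinant splits over a closed set -/
lemma det_eq_mul_of_closed (p : Fin n → Prop) [DecidablePred p]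
    (W : Matrix (Fin n) (Fin n) ℂ) (hcl : ∀ i j, p i → ¬ p j → W i j = 0) :
    W.det = (Matrix.of fun a b : {x // p x} => W a b).det *
            (Matrix.of fun a b : {x // ¬ p x} => W a b).det := by
  classical
  have h1 : W.det = (W.submatrix (Equiv.sumCompl p) (Equiv.sumCompl p)).det :=
    (Matrix.det_submatrix_equiv_self _ _).symm
  have h2 : W.submatrix (Equiv.sumCompl p) (Equiv.sumCompl p) =
      Matrix.fromBlocks (Matrix.of fun a b : {x // p x} => W a b) 0
        (Matrix.of fun (a : {x // ¬ p x}) (b : {x // p x}) => W a b)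
        (Matrix.of fun a b : {x // ¬ p x} => W a b) := by
    ext i j
    cases i with
    | inl a =>
      cases j with
      | inl b => simp [Matrix.submatrix_apply]
      | inr b =>
        simp only [Matrix.submatrix_apply, Equiv.sumCompl_apply_inl, Equiv.sumCompl_apply_inr,
          Matrix.fromBlocks_apply₁₂, Matrix.zero_apply]
        exact hcl a b a.2 b.2
    | inr a =>
      cases j with
      | inl b => simp [Matrix.submatrix_apply]
      | inr b => simp [Matrix.submatrix_apply]
  rw [h1, h2, Matrix.det_fromBlocks_zero₁₂]


/-- specRad of a matrix with a closed set splits as a max -/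
lemma specRad_max_of_closed {M : Matrix (Fin n) (Fin n) ℝ} (p : Fin n → Prop) [DecidablePred p]
    (hcl : ∀ i j, p i → ¬ p j → M i j = 0) :
    specRad M = max (specRad (Matrix.of fun i j => if p i then M i j else 0))
                    (specRad (Matrix.of fun i j => if p i then 0 else M i j)) := by
  classical
  set YR : Matrix (Fin n) (Fin n) ℝ := Matrix.of fun i j => if p i then M i j else 0 with hYR
  set ZR : Matrix (Fin n) (Fin n) ℝ := Matrix.of fun i j => if p i then 0 else M i j with hZR
  set NC : Matrix (Fin n) (Fin n) ℂ := M.map Complex.ofReal with hNC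
  set YC : Matrix (Fin n) (Fin n) ℂ := YR.map Complex.ofReal with hYC
  set ZC : Matrix (Fin n) (Fin n) ℂ := ZR.map Complex.ofReal with hZC
  have entryN : ∀ (μ : ℂ) i j, (μ • (1 : Matrix (Fin n) (Fin n) ℂ) - NC) i j
      = μ * (if i = j then 1 else 0) - (M i j : ℂ) := by
    intro μ i j
    simp [Matrix.sub_apply, Matrix.smul_apply, Matrix.one_apply, smul_eq_mul,
      Matrix.map_apply, hNC]
  have entryY : ∀ (μ : ℂ) i j, (μ • (1 : Matrix (Fin n) (Fin n) ℂ) - YC) i j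
      = μ * (if i = j then 1 else 0) - ((if p i then M i j else 0 : ℝ) : ℂ) := by
    intro μ i j
    simp [Matrix.sub_apply, Matrix.smul_apply, Matrix.one_apply, smul_eq_mul,
      Matrix.map_apply, hYC, hYR]
  have entryZ : ∀ (μ : ℂ) i j, (μ • (1 : Matrix (Fin n) (Fin n) ℂ) - ZC) i j
      = μ * (if i = j then 1 else 0) - ((if p i then 0 else M i j : ℝ) : ℂ) := by
    intro μ i j
    simp [Matrix.sub_apply, Matrix.smul_apply, Matrix.one_apply, smul_eq_mul,
      Matrix.map_apply, hZC, hZR]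
  -- determinant identity
  have hdets : ∀ μ : ℂ, (μ • (1 : Matrix (Fin n) (Fin n) ℂ) - YC).det *
      (μ • (1 : Matrix (Fin n) (Fin n) ℂ) - ZC).det
      = (μ ^ (Fintype.card {x // ¬ p x}) * μ ^ (Fintype.card {x // p x})) *
        (μ • (1 : Matrix (Fin n) (Fin n) ℂ) - NC).det := by
    intro μ
    have hNcl : ∀ i j, p i → ¬ p j → (μ • (1 : Matrix (Fin n) (Fin n) ℂ) - NC) i j = 0 := by
      intro i j hi hj
      rw [entryN]
      have hij : i ≠ j := fun h => hj (h ▸ hi)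
      rw [if_neg hij, hcl i j hi hj]
      simp
    have hYcl : ∀ i j, p i → ¬ p j → (μ • (1 : Matrix (Fin n) (Fin n) ℂ) - YC) i j = 0 := by
      intro i j hi hj
      rw [entryY]
      have hij : i ≠ j := fun h => hj (h ▸ hi)
      rw [if_neg hij, if_pos hi, hcl i j hi hj]
      simp
    have hZcl : ∀ i j, p i → ¬ p j → (μ • (1 : Matrix (Fin n) (Fin n) ℂ) - ZC) i j = 0 := by
      intro i j hi hj
      rw [entryZ]
      have hij : i ≠ j := fun h => hj (h ▸ hi)
      rw [if_neg hij, if_pos hi]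
      simp
    have eN := det_eq_mul_of_closed p _ hNcl
    have eY := det_eq_mul_of_closed p _ hYcl
    have eZ := det_eq_mul_of_closed p _ hZcl
    -- identify blocks
    have eYp : (Matrix.of fun a b : {x // p x} => (μ • (1 : Matrix (Fin n) (Fin n) ℂ) - YC) a b)
        = (Matrix.of fun a b : {x // p x} => (μ • (1 : Matrix (Fin n) (Fin n) ℂ) - NC) a b) := by
      ext a b
      simp only [Matrix.of_apply]
      rw [entryY, entryN, if_pos a.2]
    have eYq : (Matrix.of fun a b : {x // ¬ p x} => (μ • (1 : Matrix (Fin n) (Fin n) ℂ) - YC) a b)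
        = μ • (1 : Matrix {x // ¬ p x} {x // ¬ p x} ℂ) := by
      ext a b
      simp only [Matrix.of_apply, Matrix.smul_apply, Matrix.one_apply, smul_eq_mul]
      rw [entryY, if_neg a.2]
      have : ((a : Fin n) = (b : Fin n)) ↔ a = b := Subtype.coe_injective.eq_iff
      by_cases hab : a = b
      · rw [if_pos (this.mpr hab), if_pos hab]; simp
      · rw [if_neg (fun h => hab (this.mp h)), if_neg hab]; simp
    have eZp : (Matrix.of fun a b : {x // p x} => (μ • (1 : Matrix (Fin n) (Fin n) ℂ) - ZC) a b)
        = μ • (1 : Matrix {x // p x} {x // p x} ℂ) := by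
      ext a b
      simp only [Matrix.of_apply, Matrix.smul_apply, Matrix.one_apply, smul_eq_mul]
      rw [entryZ, if_pos a.2]
      have : ((a : Fin n) = (b : Fin n)) ↔ a = b := Subtype.coe_injective.eq_iff
      by_cases hab : a = b
      · rw [if_pos (this.mpr hab), if_pos hab]; simp
      · rw [if_neg (fun h => hab (this.mp h)), if_neg hab]; simp
    have eZq : (Matrix.of fun a b : {x // ¬ p x} => (μ • (1 : Matrix (Fin n) (Fin n) ℂ) - ZC) a b)
        = (Matrix.of fun a b : {x // ¬ p x} => (μ • (1 : Matrix (Fin n) (Fin n) ℂ) - NC) a b) := by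
      ext a b
      simp only [Matrix.of_apply]
      rw [entryZ, entryN, if_neg a.2]
    have hdetsmul1 : (μ • (1 : Matrix {x // ¬ p x} {x // ¬ p x} ℂ)).det
        = μ ^ (Fintype.card {x // ¬ p x}) := by
      rw [Matrix.det_smul, Matrix.det_one, mul_one]
    have hdetsmul2 : (μ • (1 : Matrix {x // p x} {x // p x} ℂ)).det
        = μ ^ (Fintype.card {x // p x}) := by
      rw [Matrix.det_smul, Matrix.det_one, mul_one]
    rw [eY, eZ, eN, eYp, eYq, eZp, eZq, hdetsmul1, hdetsmul2]
    ring
  -- now compare spectral radii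
  apply le_antisymm
  · apply specRad_le (le_max_of_le_left (specRad_nonneg YR))
    intro μ hμ
    by_cases hμ0 : μ = 0
    · subst hμ0
      simp only [norm_zero]
      exact le_max_of_le_left (specRad_nonneg YR)
    · have hdet : (μ • (1 : Matrix (Fin n) (Fin n) ℂ) - NC).det = 0 := spec_iff_det.mp hμ
      have := hdets μ
      rw [hdet, mul_zero] at this
      rcases mul_eq_zero.mp this with h | h
      · exact le_max_of_le_left (le_specRad (spec_iff_det.mpr h))
      · exact le_max_of_le_right (le_specRad (spec_iff_det.mpr h))
  · apply max_le
    · apply specRad_le (specRad_nonneg M)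
      intro μ hμ
      by_cases hμ0 : μ = 0
      · subst hμ0; simp only [norm_zero]; exact specRad_nonneg M
      · have hdet : (μ • (1 : Matrix (Fin n) (Fin n) ℂ) - YC).det = 0 := spec_iff_det.mp hμ
        have hid := hdets μ
        rw [hdet, zero_mul] at hid
        have hμn : (μ ^ (Fintype.card {x // ¬ p x}) * μ ^ (Fintype.card {x // p x})) ≠ 0 :=
          mul_ne_zero (pow_ne_zero _ hμ0) (pow_ne_zero _ hμ0)
        have : (μ • (1 : Matrix (Fin n) (Fin n) ℂ) - NC).det = 0 := by
          rcases mul_eq_zero.mp hid.symm with h | h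
          · exact absurd h hμn
          · exact h
        exact le_specRad (spec_iff_det.mpr this)
    · apply specRad_le (specRad_nonneg M)
      intro μ hμ
      by_cases hμ0 : μ = 0
      · subst hμ0; simp only [norm_zero]; exact specRad_nonneg M
      · have hdet : (μ • (1 : Matrix (Fin n) (Fin n) ℂ) - ZC).det = 0 := spec_iff_det.mp hμ
        have hid := hdets μ
        rw [hdet, mul_zero] at hid
        have hμn : (μ ^ (Fintype.card {x // ¬ p x}) * μ ^ (Fintype.card {x // p x})) ≠ 0 :=
          mul_ne_zero (pow_ne_zero _ hμ0) (pow_ne_zero _ hμ0)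
        have : (μ • (1 : Matrix (Fin n) (Fin n) ℂ) - NC).det = 0 := by
          rcases mul_eq_zero.mp hid.symm with h | h
          · exact absurd h hμn
          · exact h
        exact le_specRad (spec_iff_det.mpr this)


/-- Donsker–Varadhan inequality and equality analysis for a stochastic irreducible matrix -/
lemma dv_lemma (hn : 0 < n) {W : Matrix (Fin n) (Fin n) ℝ} (hW : Nonneg W)
    (hirr : MatIrred W) (hstoch : ∀ i, ∑ j, W i j = 1)
    {π : Fin n → ℝ} (hπ : ∀ i, 0 < π i) (hstat : ∀ j, ∑ i, π i * W i j = π j)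
    (g : Fin n → ℝ) :
    (∑ i, π i * g i) ≤ Real.log (specRad (expDiag g * W)) * (∑ i, π i) ∧
    (Real.log (specRad (expDiag g * W)) * (∑ i, π i) = ∑ i, π i * g i →
      ∃ L : Fin n → ℝ, ∀ i j, 0 < W i j →
        g i = Real.log (specRad (expDiag g * W)) + L i - L j) := by
  -- Perron data for expDiag g * W
  have hWg : Nonneg (expDiag g * W) := hW.expDiag_mul g
  have hirrg : MatIrred (expDiag g * W) :=
    matIrred_of_pattern hW hWg (fun i j => (expDiag_pattern hW g i j).symm) hirr
  obtain ⟨r, w, v, hr, hw, hv, heig, -, hspec⟩ := perron hn hWg hirrg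
  rw [hspec]
  set σ : Fin n → ℝ := fun i => ∑ j, W i j * w j with hσdef
  have hσ : ∀ i, 0 < σ i := by
    intro i
    apply (sum_pos_iff fun j => mul_nonneg (hW i j) (hw j).le).mpr
    have h1 : 0 < ∑ j, W i j := by rw [hstoch i]; norm_num
    obtain ⟨j, hj⟩ := (sum_pos_iff fun j => hW i j).mp h1
    exact ⟨j, mul_pos hj (hw j)⟩
  have heigi : ∀ i, r * w i = Real.exp (g i) * σ i := by
    intro i
    have h1 := congrFun heig i
    have h2 : ((expDiag g * W).mulVec w) i = ∑ j, (expDiag g * W) i j * w j := rfl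
    have h3 : ∑ j, (expDiag g * W) i j * w j = Real.exp (g i) * σ i := by
      rw [hσdef, Finset.mul_sum]
      apply Finset.sum_congr rfl; intro j _
      rw [expDiag_mul_apply]; ring
    have h4 : (r • w) i = r * w i := rfl
    rw [h2, h3, h4] at h1
    exact h1.symm
  set L : Fin n → ℝ := fun i => Real.log (w i) with hLdef
  have hlog : ∀ i, Real.log r = g i + Real.log (σ i) - L i := by
    intro i
    have h1 := heigi i
    have h2 : Real.log (r * w i) = Real.log (Real.exp (g i) * σ i) := by rw [h1]
    rw [Real.log_mul (ne_of_gt hr) (ne_of_gt (hw i)),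
      Real.log_mul (Real.exp_ne_zero _) (ne_of_gt (hσ i)), Real.log_exp] at h2
    have : L i = Real.log (w i) := rfl
    rw [this]; linarith
  -- deficit
  set Df : Fin n → ℝ := fun i => Real.log (σ i) - ∑ j, W i j * L j with hDdef
  have hD0 : ∀ i, 0 ≤ Df i := by
    intro i
    have key : ∑ j, W i j * (L j - Real.log (σ i)) ≤ ∑ j, W i j * (w j / σ i - 1) := by
      apply Finset.sum_le_sum
      intro j _
      rcases eq_or_lt_of_le (hW i j) with h | h
      · rw [← h]; ring_nf; exact le_refl _
      · apply mul_le_mul_of_nonneg_left _ (hW i j)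
        have hlj : L j - Real.log (σ i) = Real.log (w j / σ i) := by
          rw [Real.log_div (ne_of_gt (hw j)) (ne_of_gt (hσ i))]
        rw [hlj]
        exact Real.log_le_sub_one_of_pos (div_pos (hw j) (hσ i))
    have hrhs : ∑ j, W i j * (w j / σ i - 1) = 0 := by
      have h1 : ∑ j, W i j * (w j / σ i - 1) = (∑ j, W i j * w j) / σ i - ∑ j, W i j := by
        rw [Finset.sum_div, ← Finset.sum_sub_distrib]
        apply Finset.sum_congr rfl; intro j _; ring
      rw [h1, hstoch i]
      have : (∑ j, W i j * w j) = σ i := rfl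
      rw [this, div_self (ne_of_gt (hσ i))]
      ring
    have hlhs : ∑ j, W i j * (L j - Real.log (σ i)) = (∑ j, W i j * L j) - Real.log (σ i) := by
      have h1 : ∑ j, W i j * (L j - Real.log (σ i))
          = (∑ j, W i j * L j) - (∑ j, W i j) * Real.log (σ i) := by
        rw [Finset.sum_mul, ← Finset.sum_sub_distrib]
        apply Finset.sum_congr rfl; intro j _; ring
      rw [h1, hstoch i, one_mul]
    have hDi : Df i = Real.log (σ i) - ∑ j, W i j * L j := rfl
    rw [hDi]
    rw [hlhs, hrhs] at key
    linarith
  -- key identity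
  have hmid : ∑ i, π i * (∑ j, W i j * L j) = ∑ j, π j * L j := by
    have h1 : ∑ i, π i * (∑ j, W i j * L j) = ∑ i, ∑ j, π i * W i j * L j := by
      apply Finset.sum_congr rfl; intro i _
      rw [Finset.mul_sum]
      apply Finset.sum_congr rfl; intro j _; ring
    rw [h1, Finset.sum_comm]
    apply Finset.sum_congr rfl; intro j _
    rw [← Finset.sum_mul, hstat j]
  have hkey : Real.log r * (∑ i, π i) = (∑ i, π i * g i) + ∑ i, π i * Df i := by
    have h2 : ∀ i, Real.log r * π i
        = π i * g i + π i * (∑ j, W i j * L j) - π i * L i + π i * Df i := by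
      intro i
      have hDi : Df i = Real.log (σ i) - ∑ j, W i j * L j := rfl
      have h3 : Real.log r = g i + Df i + (∑ j, W i j * L j) - L i := by
        rw [hDi]; linarith [hlog i]
      rw [h3]; ring
    calc Real.log r * (∑ i, π i) = ∑ i, Real.log r * π i := by rw [Finset.mul_sum]
      _ = ∑ i, (π i * g i + π i * (∑ j, W i j * L j) - π i * L i + π i * Df i) :=
          Finset.sum_congr rfl (fun i _ => h2 i)
      _ = ((∑ i, (π i * g i + π i * (∑ j, W i j * L j) - π i * L i)) + ∑ i, π i * Df i) := by
          rw [← Finset.sum_add_distrib]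
      _ = ((∑ i, (π i * g i + π i * (∑ j, W i j * L j))) - (∑ i, π i * L i)) + ∑ i, π i * Df i := by
          rw [← Finset.sum_sub_distrib]
      _ = ((∑ i, π i * g i) + (∑ i, π i * (∑ j, W i j * L j)) - (∑ i, π i * L i)) + ∑ i, π i * Df i := by
          rw [← Finset.sum_add_distrib]
      _ = (∑ i, π i * g i) + ∑ i, π i * Df i := by rw [hmid]; ring
  have hDsum : 0 ≤ ∑ i, π i * Df i :=
    Finset.sum_nonneg fun i _ => mul_nonneg (hπ i).le (hD0 i)
  constructor
  · linarith
  · intro hEq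
    have hDzero : ∀ i, Df i = 0 := by
      have hz : ∑ i, π i * Df i = 0 := by linarith
      intro i
      have := (Finset.sum_eq_zero_iff_of_nonneg
        (fun i _ => mul_nonneg (hπ i).le (hD0 i))).mp hz i (Finset.mem_univ i)
      rcases mul_eq_zero.mp this with h | h
      · exact absurd h (ne_of_gt (hπ i))
      · exact h
    refine ⟨L, fun i j hWij => ?_⟩
    -- per-row equality forces w j = σ i on edges
    have hterm : ∀ k, 0 ≤ W i k * (w k / σ i - 1 - Real.log (w k / σ i)) := by
      intro k
      apply mul_nonneg (hW i k)
      have := Real.log_le_sub_one_of_pos (div_pos (hw k) (hσ i))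
      linarith
    have hsumterm : ∑ k, W i k * (w k / σ i - 1 - Real.log (w k / σ i)) = 0 := by
      have e1 : ∑ k, W i k * (w k / σ i - 1) = 0 := by
        have h1 : ∑ k, W i k * (w k / σ i - 1) = (∑ k, W i k * w k) / σ i - ∑ k, W i k := by
          rw [Finset.sum_div, ← Finset.sum_sub_distrib]
          apply Finset.sum_congr rfl; intro k _; ring
        rw [h1, hstoch i]
        have : (∑ k, W i k * w k) = σ i := rfl
        rw [this, div_self (ne_of_gt (hσ i))]; ring
      have e2 : ∑ k, W i k * Real.log (w k / σ i) = -Df i := by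
        have h1 : ∀ k, W i k * Real.log (w k / σ i) = W i k * L k - W i k * Real.log (σ i) := by
          intro k
          rw [Real.log_div (ne_of_gt (hw k)) (ne_of_gt (hσ i))]
          have : L k = Real.log (w k) := rfl
          rw [this]; ring
        rw [Finset.sum_congr rfl (fun k _ => h1 k), Finset.sum_sub_distrib,
          ← Finset.sum_mul, hstoch i, one_mul]
        have hDi : Df i = Real.log (σ i) - ∑ k, W i k * L k := rfl
        rw [hDi]; ring
      have e3 : ∑ k, W i k * (w k / σ i - 1 - Real.log (w k / σ i))
          = (∑ k, W i k * (w k / σ i - 1)) - ∑ k, W i k * Real.log (w k / σ i) := by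
        rw [← Finset.sum_sub_distrib]
        apply Finset.sum_congr rfl; intro k _; ring
      rw [e3, e1, e2, hDzero i]; ring
    have hj0 : W i j * (w j / σ i - 1 - Real.log (w j / σ i)) = 0 :=
      (Finset.sum_eq_zero_iff_of_nonneg (fun k _ => hterm k)).mp hsumterm j (Finset.mem_univ j)
    have hx1 : w j / σ i = 1 := by
      rcases mul_eq_zero.mp hj0 with h | h
      · exact absurd h (ne_of_gt hWij)
      · by_contra hne
        have := Real.log_lt_sub_one_of_pos (div_pos (hw j) (hσ i)) hne
        linarith
    have hwj : w j = σ i := by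
      have := hσ i
      field_simp at hx1
      linarith
    have hLj : L j = Real.log (σ i) := by
      have : L j = Real.log (w j) := rfl
      rw [this, hwj]
    have := hlog i
    rw [← hLj] at this
    linarith

/-- if d is a coboundary+constant on the support, Property1 fails (given d nonconstant) -/
lemma coboundary_not_P1 {A : Matrix (Fin n) (Fin n) ℝ} (hn : 0 < n) (hA : Nonneg A)
    (hirrA : MatIrred A) (d : Fin n → ℝ) (c : ℝ) (ψ : Fin n → ℝ)
    (hedge : ∀ i j, 0 < A i j → d i = c + ψ i - ψ j)
    (hd : ¬ ∃ c' : ℝ, ∀ i, d i = c') : ¬ Property1 A := by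
  have key : ∀ s : ℝ, specRad (expDiag (fun i => s * d i) * A)
      = Real.exp (s * c) * specRad A := by
    intro s
    have hmat : expDiag (fun i => s * d i) * A
        = Real.exp (s * c) • (expDiag (fun i => s * ψ i) * A * expDiag (-(fun i => s * ψ i))) := by
      ext i j
      have h1 : (expDiag (fun i => s * d i) * A) i j = Real.exp (s * d i) * A i j :=
        expDiag_mul_apply _ A i j
      have e1 : (expDiag (fun i => s * ψ i) * A * expDiag (-(fun i => s * ψ i))) i j
          = (expDiag (fun i => s * ψ i) * A) i j * Real.exp (-(s * ψ j)) := by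
        simp only [expDiag]
        rw [Matrix.mul_diagonal]
        simp only [Pi.neg_apply]
      have e2 : (expDiag (fun i => s * ψ i) * A) i j = Real.exp (s * ψ i) * A i j :=
        expDiag_mul_apply _ A i j
      have h2 : (Real.exp (s * c) • (expDiag (fun i => s * ψ i) * A
          * expDiag (-(fun i => s * ψ i)))) i j
          = Real.exp (s * c) * (Real.exp (s * ψ i) * A i j * Real.exp (-(s * ψ j))) := by
        have e3 : (Real.exp (s * c) • (expDiag (fun i => s * ψ i) * A
            * expDiag (-(fun i => s * ψ i)))) i j
            = Real.exp (s * c) * (expDiag (fun i => s * ψ i) * A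
              * expDiag (-(fun i => s * ψ i))) i j := rfl
        rw [e3, e1, e2]
      rw [h1, h2]
      rcases eq_or_lt_of_le (hA i j) with h | h
      · rw [← h]; ring
      · have hdi := hedge i j h
        rw [hdi]
        rw [show s * (c + ψ i - ψ j) = s * c + (s * ψ i + -(s * ψ j)) by ring,
          Real.exp_add, Real.exp_add]
        ring
    rw [hmat, specRad_smul (Real.exp_pos _),
      specRad_conj (expDiag_inv (fun i => s * ψ i)).1 (expDiag_inv (fun i => s * ψ i)).2]
  obtain ⟨rA, uA, vA, hrA, -, -, -, -, hspecA⟩ := perron hn hA hirrA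
  have hρ : 0 < specRad A := by rw [hspecA]; exact hrA
  have hlogs : ∀ s : ℝ, Real.log (Real.exp (s * c) * specRad A)
      = s * c + Real.log (specRad A) := by
    intro s
    rw [Real.log_mul (Real.exp_ne_zero _) (ne_of_gt hρ), Real.log_exp]
  intro hP1
  have h12 : (1:ℝ)/2 ∈ Set.Ioo (0:ℝ) 1 := by norm_num
  have hC : (fun i => (1 - (1:ℝ)/2) * d i + ((1:ℝ)/2) * (fun _ : Fin n => (0:ℝ)) i)
      = fun i => ((1:ℝ)/2) * d i := by funext i; norm_num
  have hL : Real.log (specRad (expDiag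
      (fun i => (1 - (1:ℝ)/2) * d i + ((1:ℝ)/2) * (fun _ : Fin n => (0:ℝ)) i) * A))
      = (1/2 : ℝ) * c + Real.log (specRad A) := by
    rw [hC, key (1/2), hlogs]
  have hR1 : Real.log (specRad (expDiag d * A)) = (1:ℝ) * c + Real.log (specRad A) := by
    have hdd : (d : Fin n → ℝ) = (fun i => (1:ℝ) * d i) := by funext i; rw [one_mul]
    rw [hdd, key 1, hlogs]
  have hR0 : Real.log (specRad (expDiag (fun _ : Fin n => (0:ℝ)) * A))
      = (0:ℝ) * c + Real.log (specRad A) := by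
    have hzz : (fun _ : Fin n => (0:ℝ)) = (fun i : Fin n => (0:ℝ) * d i) := by
      funext i; rw [zero_mul]
    rw [hzz, key 0, hlogs]
  have heqhyp : Real.log (specRad (expDiag
      (fun i => (1 - (1:ℝ)/2) * d i + ((1:ℝ)/2) * (fun _ : Fin n => (0:ℝ)) i) * A))
      = (1 - (1:ℝ)/2) * Real.log (specRad (expDiag d * A))
        + ((1:ℝ)/2) * Real.log (specRad (expDiag (fun _ : Fin n => (0:ℝ)) * A)) := by
    rw [hL, hR1, hR0]; ring
  obtain ⟨c', hc'⟩ := hP1 d (fun _ => 0) (1/2) h12 heqhyp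
  apply hd
  refine ⟨c', fun i => ?_⟩
  have := hc' i
  simpa using this

/-- a proper nonempty closed set kills Property1 -/
lemma closed_not_P1 {X : Matrix (Fin n) (Fin n) ℝ} (hX : Nonneg X)
    (p : Fin n → Prop) [DecidablePred p] (hp : ∃ i, p i) (hq : ∃ i, ¬ p i)
    (hcl : ∀ i j, p i → ¬ p j → X i j = 0) : ¬ Property1 X := by
  classical
  set ρY : ℝ := specRad (Matrix.of fun i j : Fin n => if p i then X i j else 0) with hρY
  set ρZ : ℝ := specRad (Matrix.of fun i j : Fin n => if p i then 0 else X i j) with hρZ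
  have hρY0 : 0 ≤ ρY := specRad_nonneg _
  have hρZ0 : 0 ≤ ρZ := specRad_nonneg _
  -- main evaluation: for any T s, specRad of scaled matrix
  have key : ∀ T s : ℝ, specRad (expDiag (fun i => if p i then T - s else 0) * X)
      = max (Real.exp (T - s) * ρY) ρZ := by
    intro T s
    set E : Fin n → ℝ := fun i => if p i then T - s else 0 with hE
    set M : Matrix (Fin n) (Fin n) ℝ := expDiag E * X with hM
    have hMcl : ∀ i j, p i → ¬ p j → M i j = 0 := by
      intro i j hi hj
      rw [hM, expDiag_mul_apply, hcl i j hi hj, mul_zero]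
    have hsplit := specRad_max_of_closed p hMcl
    have hYM : (Matrix.of fun i j : Fin n => if p i then M i j else 0)
        = Real.exp (T - s) • (Matrix.of fun i j : Fin n => if p i then X i j else 0) := by
      ext i j
      simp only [Matrix.of_apply, Matrix.smul_apply, smul_eq_mul]
      by_cases hi : p i
      · rw [if_pos hi, if_pos hi, hM, expDiag_mul_apply, hE]
        simp only [if_pos hi]
      · rw [if_neg hi, if_neg hi, mul_zero]
    have hZM : (Matrix.of fun i j : Fin n => if p i then 0 else M i j)
        = (Matrix.of fun i j : Fin n => if p i then 0 else X i j) := by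
      ext i j
      simp only [Matrix.of_apply]
      by_cases hi : p i
      · rw [if_pos hi, if_pos hi]
      · rw [if_neg hi, if_neg hi, hM, expDiag_mul_apply, hE]
        simp only [if_neg hi, Real.exp_zero, one_mul]
    rw [hsplit, hYM, hZM, specRad_smul (Real.exp_pos _), ← hρY, ← hρZ]
  intro hP1
  -- choose T
  rcases eq_or_lt_of_le hρY0 with hY0 | hYpos
  · -- ρY = 0 : all values equal ρZ
    have hval : ∀ T s : ℝ, specRad (expDiag (fun i => if p i then T - s else 0) * X) = ρZ := by
      intro T s
      rw [key T s, ← hY0, mul_zero, max_eq_right hρZ0]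
    have h12 : (1:ℝ)/2 ∈ Set.Ioo (0:ℝ) 1 := by norm_num
    set C : Fin n → ℝ := fun i => if p i then (1:ℝ) else 0 with hCdef
    set D : Fin n → ℝ := fun i => (0:ℝ) with hDdef
    have hmix : (fun i => (1 - (1:ℝ)/2) * C i + ((1:ℝ)/2) * D i)
        = fun i => if p i then (1:ℝ) - 1/2 else 0 := by
      funext i; rw [hCdef, hDdef]; by_cases hi : p i <;> simp [hi]
    have hCeq : C = fun i => if p i then (1:ℝ) - 0 else 0 := by
      funext i; rw [hCdef]; by_cases hi : p i <;> simp [hi]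
    have hDeq : D = fun i => if p i then (1:ℝ) - 1 else 0 := by
      funext i; rw [hDdef]; by_cases hi : p i <;> simp [hi]
    have heqhyp : Real.log (specRad (expDiag
        (fun i => (1 - (1:ℝ)/2) * C i + ((1:ℝ)/2) * D i) * X))
        = (1 - (1:ℝ)/2) * Real.log (specRad (expDiag C * X))
          + ((1:ℝ)/2) * Real.log (specRad (expDiag D * X)) := by
      rw [hmix, hCeq, hDeq]
      rw [hval 1 (1/2), hval 1 0, hval 1 1]
      ring
    obtain ⟨c', hc'⟩ := hP1 C D (1/2) h12 heqhyp
    obtain ⟨i0, hi0⟩ := hp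
    obtain ⟨j0, hj0⟩ := hq
    have e1 := hc' i0
    have e2 := hc' j0
    rw [hCdef, hDdef] at e1 e2
    simp only [if_pos hi0] at e1
    simp only [if_neg hj0] at e2
    -- e1 : 1 - 0 = c', e2 : 0 - 0 = c'
    norm_num at e1 e2
    rw [← e2] at e1
    norm_num at e1
  · -- ρY > 0
    set T : ℝ := 1 + Real.log (ρZ / ρY + 1) with hT
    have hdom : ∀ s : ℝ, s ≤ 1 → ρZ ≤ Real.exp (T - s) * ρY := by
      intro s hs
      have h1 : Real.exp (T - 1) * ρY ≤ Real.exp (T - s) * ρY := by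
        apply mul_le_mul_of_nonneg_right _ hρY0
        exact Real.exp_le_exp.mpr (by linarith)
      have h2 : Real.exp (T - 1) = ρZ / ρY + 1 := by
        rw [hT]
        have : (1:ℝ) + Real.log (ρZ / ρY + 1) - 1 = Real.log (ρZ / ρY + 1) := by ring
        rw [this, Real.exp_log]
        positivity
      have h3 : (ρZ / ρY + 1) * ρY = ρZ + ρY := by
        field_simp
      nlinarith [hYpos]
    have hval : ∀ s : ℝ, s ≤ 1 → specRad (expDiag (fun i => if p i then T - s else 0) * X)
        = Real.exp (T - s) * ρY := by
      intro s hs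
      rw [key T s, max_eq_left (hdom s hs)]
    have h12 : (1:ℝ)/2 ∈ Set.Ioo (0:ℝ) 1 := by norm_num
    set C : Fin n → ℝ := fun i => if p i then T else 0 with hCdef
    set D : Fin n → ℝ := fun i => if p i then T - 1 else 0 with hDdef
    have hmix : (fun i => (1 - (1:ℝ)/2) * C i + ((1:ℝ)/2) * D i)
        = fun i => if p i then T - 1/2 else 0 := by
      funext i; rw [hCdef, hDdef]; by_cases hi : p i
      · simp only [if_pos hi]; ring
      · simp only [if_neg hi]; ring
    have hCeq : C = fun i => if p i then T - 0 else 0 := by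
      funext i; rw [hCdef]; by_cases hi : p i
      · simp only [if_pos hi]; ring
      · simp only [if_neg hi]
    have hlogv : ∀ s : ℝ, s ≤ 1 →
        Real.log (specRad (expDiag (fun i => if p i then T - s else 0) * X))
        = (T - s) + Real.log ρY := by
      intro s hs
      rw [hval s hs, Real.log_mul (Real.exp_ne_zero _) (ne_of_gt hYpos), Real.log_exp]
    have heqhyp : Real.log (specRad (expDiag
        (fun i => (1 - (1:ℝ)/2) * C i + ((1:ℝ)/2) * D i) * X))
        = (1 - (1:ℝ)/2) * Real.log (specRad (expDiag C * X))
          + ((1:ℝ)/2) * Real.log (specRad (expDiag D * X)) := by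
      rw [hmix, hCeq]
      rw [hlogv (1/2) (by norm_num), hlogv 0 (by norm_num), hlogv 1 (by norm_num)]
      ring
    obtain ⟨c', hc'⟩ := hP1 C D (1/2) h12 heqhyp
    obtain ⟨i0, hi0⟩ := hp
    obtain ⟨j0, hj0⟩ := hq
    have e1 := hc' i0
    have e2 := hc' j0
    rw [hCdef, hDdef] at e1 e2
    simp only [if_pos hi0] at e1
    simp only [if_neg hj0] at e2
    -- e1 : T - (T - 1) = c', e2 : 0 - 0 = c'
    norm_num at e1 e2
    rw [← e2] at e1
    norm_num at e1

set_option maxHeartbeats 2000000 in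
/-- equality in log-convexity for an irreducible matrix forces coboundary structure -/
lemma equality_coboundary {B : Matrix (Fin n) (Fin n) ℝ} (hn : 0 < n) (hB : Nonneg B)
    (hirrB : MatIrred B) {C D : Fin n → ℝ} {t : ℝ} (ht : t ∈ Set.Ioo (0:ℝ) 1)
    (heq : Real.log (specRad (expDiag (fun i => (1 - t) * C i + t * D i) * B)) =
      (1 - t) * Real.log (specRad (expDiag C * B)) + t * Real.log (specRad (expDiag D * B))) :
    ∃ (c : ℝ) (ψ : Fin n → ℝ), ∀ i j, 0 < B i j → C i - D i = c + ψ i - ψ j := by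
  classical
  haveI : Nonempty (Fin n) := ⟨⟨0, hn⟩⟩
  obtain ⟨ht0, ht1⟩ := ht
  set Et : Fin n → ℝ := fun i => (1 - t) * C i + t * D i with hEt
  set Mt : Matrix (Fin n) (Fin n) ℝ := expDiag Et * B with hMt
  have hMtnn : Nonneg Mt := hB.expDiag_mul Et
  have hMtpat : ∀ i j, 0 < Mt i j ↔ 0 < B i j := expDiag_pattern hB Et
  have hirrMt : MatIrred Mt := matIrred_of_pattern hB hMtnn (fun i j => (hMtpat i j).symm) hirrB
  obtain ⟨rt, u, vt, hrt, hu, -, heigMt, -, hspecMt⟩ := perron hn hMtnn hirrMt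
  set W : Matrix (Fin n) (Fin n) ℝ := Matrix.of (fun i j => Mt i j * u j / (rt * u i)) with hWdef
  have hWapp : ∀ i j, W i j = Mt i j * u j / (rt * u i) := fun i j => rfl
  have hWnn : Nonneg W := fun i j => by
    rw [hWapp]
    exact div_nonneg (mul_nonneg (hMtnn i j) (hu j).le) (mul_nonneg hrt.le (hu i).le)
  have hWpat : ∀ i j, 0 < W i j ↔ 0 < B i j := by
    intro i j
    rw [hWapp]
    constructor
    · intro h
      by_contra hb
      have hb0 : Mt i j = 0 := by
        have := (hMtpat i j).not.mpr hb
        exact le_antisymm (not_lt.mp this) (hMtnn i j)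
      rw [hb0, zero_mul, zero_div] at h
      exact lt_irrefl 0 h
    · intro h
      exact div_pos (mul_pos ((hMtpat i j).mpr h) (hu j)) (mul_pos hrt (hu i))
  have hstoch : ∀ i, ∑ j, W i j = 1 := by
    intro i
    have h1 : ∑ j, W i j = (∑ j, Mt i j * u j) / (rt * u i) := by
      rw [Finset.sum_div]
      exact Finset.sum_congr rfl fun j _ => hWapp i j
    have h2 : (∑ j, Mt i j * u j) = (Mt.mulVec u) i := rfl
    have h3 : (Mt.mulVec u) i = rt * u i := by
      rw [heigMt]; rfl
    rw [h1, h2, h3, div_self (ne_of_gt (mul_pos hrt (hu i)))]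
  have hirrW : MatIrred W := matIrred_of_pattern hB hWnn (fun i j => (hWpat i j).symm) hirrB
  obtain ⟨rW, uW, π, hrW, -, hπ, -, heigWT, -⟩ := perron hn hWnn hirrW
  have hπsum : 0 < ∑ i, π i := Finset.sum_pos (fun i _ => hπ i) Finset.univ_nonempty
  have hWT : ∀ j, ∑ i, W i j * π i = rW * π j := by
    intro j
    have h1 := congrFun heigWT j
    have h2 : (Wᵀ.mulVec π) j = ∑ i, W i j * π i := by
      simp only [Matrix.mulVec, dotProduct, Matrix.transpose_apply]
    have h3 : (rW • π) j = rW * π j := rfl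
    rw [h2, h3] at h1
    exact h1
  have hrW1 : rW = 1 := by
    have h1 : ∑ j, ∑ i, W i j * π i = ∑ j, rW * π j :=
      Finset.sum_congr rfl fun j _ => hWT j
    have h2 : ∑ j, ∑ i, W i j * π i = ∑ i, π i := by
      rw [Finset.sum_comm]
      apply Finset.sum_congr rfl; intro i _
      rw [← Finset.sum_mul, hstoch i, one_mul]
    have h3 : ∑ j, rW * π j = rW * ∑ j, π j := by rw [Finset.mul_sum]
    rw [h2, h3] at h1
    have := h1
    nlinarith [hπsum]
  have hstat : ∀ j, ∑ i, π i * W i j = π j := by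
    intro j
    have h1 := hWT j
    rw [hrW1, one_mul] at h1
    rw [← h1]
    apply Finset.sum_congr rfl; intro i _; ring
  -- conjugation identity
  have hconj : ∀ g : Fin n → ℝ, specRad (expDiag g * W)
      = rt⁻¹ * specRad (expDiag (g + Et) * B) := by
    intro g
    set U : Matrix (Fin n) (Fin n) ℝ := Matrix.diagonal u with hU
    set Uinv : Matrix (Fin n) (Fin n) ℝ := Matrix.diagonal (fun i => (u i)⁻¹) with hUinv
    have hUVinv : Uinv * U = 1 := by
      rw [hU, hUinv, Matrix.diagonal_mul_diagonal]
      have : (fun i => (u i)⁻¹ * u i) = fun _ => (1:ℝ) := by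
        funext i; exact inv_mul_cancel₀ (ne_of_gt (hu i))
      rw [this, Matrix.diagonal_one]
    have hVUinv : U * Uinv = 1 := by
      rw [hU, hUinv, Matrix.diagonal_mul_diagonal]
      have : (fun i => u i * (u i)⁻¹) = fun _ => (1:ℝ) := by
        funext i; exact mul_inv_cancel₀ (ne_of_gt (hu i))
      rw [this, Matrix.diagonal_one]
    have hmat : expDiag g * W = rt⁻¹ • (Uinv * (expDiag g * Mt) * U) := by
      ext i j
      have h1 : (expDiag g * W) i j = Real.exp (g i) * W i j := expDiag_mul_apply g W i j
      have h2 : (rt⁻¹ • (Uinv * (expDiag g * Mt) * U)) i j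
          = rt⁻¹ * ((u i)⁻¹ * (Real.exp (g i) * Mt i j) * u j) := by
        have e1 : (rt⁻¹ • (Uinv * (expDiag g * Mt) * U)) i j
            = rt⁻¹ * (Uinv * (expDiag g * Mt) * U) i j := rfl
        rw [e1, hU, Matrix.mul_diagonal, hUinv, Matrix.diagonal_mul,
          expDiag_mul_apply]
      rw [h1, h2, hWapp, div_eq_mul_inv, mul_inv]
      ring
    rw [hmat, specRad_smul (inv_pos.mpr hrt), specRad_conj hUVinv hVUinv]
    congr 1
    rw [hMt, ← mul_assoc, expDiag_mul_expDiag]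
  -- values
  have hg1Et : (fun i => t * (C i - D i)) + Et = C := by
    funext i
    simp only [Pi.add_apply, hEt]
    ring
  have hg2Et : (fun i => -((1 - t) * (C i - D i))) + Et = D := by
    funext i
    simp only [Pi.add_apply, hEt]
    ring
  set g1 : Fin n → ℝ := fun i => t * (C i - D i) with hg1
  set g2 : Fin n → ℝ := fun i => -((1 - t) * (C i - D i)) with hg2
  obtain ⟨rC, uC, vC, hrC, -, -, -, -, hspecC⟩ := perron hn (hB.expDiag_mul C)
    (matIrred_of_pattern hB (hB.expDiag_mul C) (fun i j => (expDiag_pattern hB C i j).symm) hirrB)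
  obtain ⟨rD, uD, vD, hrD, -, -, -, -, hspecD⟩ := perron hn (hB.expDiag_mul D)
    (matIrred_of_pattern hB (hB.expDiag_mul D) (fun i j => (expDiag_pattern hB D i j).symm) hirrB)
  have hρ1 : specRad (expDiag g1 * W) = rt⁻¹ * rC := by
    rw [hconj g1, hg1Et, hspecC]
  have hρ2 : specRad (expDiag g2 * W) = rt⁻¹ * rD := by
    rw [hconj g2, hg2Et, hspecD]
  have hl1 : Real.log (specRad (expDiag g1 * W)) = Real.log rC - Real.log rt := by
    rw [hρ1, Real.log_mul (inv_ne_zero (ne_of_gt hrt)) (ne_of_gt hrC), Real.log_inv]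
    ring
  have hl2 : Real.log (specRad (expDiag g2 * W)) = Real.log rD - Real.log rt := by
    rw [hρ2, Real.log_mul (inv_ne_zero (ne_of_gt hrt)) (ne_of_gt hrD), Real.log_inv]
    ring
  have hcomb : (1 - t) * Real.log (specRad (expDiag g1 * W))
      + t * Real.log (specRad (expDiag g2 * W)) = 0 := by
    rw [hl1, hl2]
    have h := heq
    rw [hspecMt, hspecC, hspecD] at h
    linear_combination -h
  set S : ℝ := ∑ i, π i * (C i - D i) with hS
  have hsum1 : ∑ i, π i * g1 i = t * S := by
    rw [hS, Finset.mul_sum]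
    apply Finset.sum_congr rfl; intro i _
    have : g1 i = t * (C i - D i) := rfl
    rw [this]; ring
  have hsum2 : ∑ i, π i * g2 i = -((1 - t) * S) := by
    have e1 : ∀ i, π i * g2 i = -((1 - t) * (π i * (C i - D i))) := by
      intro i
      have : g2 i = -((1 - t) * (C i - D i)) := rfl
      rw [this]; ring
    rw [Finset.sum_congr rfl (fun i _ => e1 i)]
    rw [Finset.sum_neg_distrib, ← Finset.mul_sum]
  obtain ⟨hdv1, hdv1eq⟩ := dv_lemma hn hWnn hirrW hstoch hπ hstat g1
  obtain ⟨hdv2, hdv2eq⟩ := dv_lemma hn hWnn hirrW hstoch hπ hstat g2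
  set P : ℝ := ∑ i, π i with hP
  set l1 : ℝ := Real.log (specRad (expDiag g1 * W)) with hl1d
  set l2 : ℝ := Real.log (specRad (expDiag g2 * W)) with hl2d
  have ha : 0 ≤ l1 * P - t * S := by
    have := hdv1
    rw [hsum1] at this
    linarith
  have hb : 0 ≤ l2 * P + (1 - t) * S := by
    have := hdv2
    rw [hsum2] at this
    linarith
  have hab : (1 - t) * (l1 * P - t * S) + t * (l2 * P + (1 - t) * S) = 0 := by
    linear_combination P * hcomb
  have h1t : 0 < 1 - t := by linarith
  have hta : (1 - t) * (l1 * P - t * S) = -(t * (l2 * P + (1 - t) * S)) := by linarith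
  have hle : (1 - t) * (l1 * P - t * S) ≤ 0 := by
    rw [hta]
    simp only [neg_nonpos]
    exact mul_nonneg ht0.le hb
  have hge : 0 ≤ (1 - t) * (l1 * P - t * S) := mul_nonneg h1t.le ha
  have hz : (1 - t) * (l1 * P - t * S) = 0 := le_antisymm hle hge
  have hz2 : l1 * P - t * S = 0 := by
    rcases mul_eq_zero.mp hz with h | h
    · linarith
    · exact h
  have heqdv : l1 * P = ∑ i, π i * g1 i := by
    rw [hsum1]
    linarith
  obtain ⟨L, hL⟩ := hdv1eq heqdv
  have ht' : t ≠ 0 := ne_of_gt ht0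
  refine ⟨l1 / t, fun i => L i / t, fun i j hBij => ?_⟩
  have hWij := (hWpat i j).mpr hBij
  have hLij := hL i j hWij
  have hg1i : g1 i = t * (C i - D i) := rfl
  have h2 : t * (C i - D i) = l1 + L i - L j := by
    rw [← hg1i]
    exact hLij
  calc C i - D i = (t * (C i - D i)) / t := (mul_div_cancel_left₀ _ ht').symm
    _ = (l1 + L i - L j) / t := by rw [h2]
    _ = l1 / t + L i / t - L j / t := by ring

lemma transfer {A B : Matrix (Fin n) (Fin n) ℝ} (hn : 0 < n)
    (hA : Nonneg A) (hB : Nonneg B) (hpat : ∀ i j, 0 < A i j ↔ 0 < B i j)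
    (hirrA : MatIrred A) (hirrB : MatIrred B)
    (hnP1B : ¬ Property1 B) : ¬ Property1 A := by
  unfold Property1 at hnP1B
  push_neg at hnP1B
  obtain ⟨C, D, t, ht, heq, hnc⟩ := hnP1B
  obtain ⟨c, ψ, hedge⟩ := equality_coboundary hn hB hirrB ht heq
  apply coboundary_not_P1 hn hA hirrA (fun i => C i - D i) c ψ
    (fun i j hij => hedge i j ((hpat i j).mp hij))
  rintro ⟨c', hc'⟩
  obtain ⟨i, hi⟩ := hnc c'
  exact hi (hc' i)


end SRA


theorem stmt5 {n : ℕ} (A B : Matrix (Fin n) (Fin n) ℝ)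
    (hA : ∀ i j, 0 ≤ A i j) (hB : ∀ i j, 0 ≤ B i j)
    (hsign : ∀ i j, A i j = 0 ↔ B i j = 0) :
    Property1 A ↔ Property1 B := by
  classical
  have hA' : SRA.Nonneg A := hA
  have hB' : SRA.Nonneg B := hB
  by_cases hn1 : n ≤ 1
  · have htriv : ∀ X : Matrix (Fin n) (Fin n) ℝ, Property1 X := by
      intro X C D t ht heq
      rcases Nat.lt_or_ge n 1 with h | h
      · have hn0 : n = 0 := by omega
        subst hn0
        exact ⟨0, fun i => i.elim0⟩
      · have hn1' : n = 1 := by omega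
        subst hn1'
        refine ⟨C 0 - D 0, fun i => ?_⟩
        have hi : i = 0 := Subsingleton.elim i 0
        rw [hi]
    exact iff_of_true (htriv A) (htriv B)
  push_neg at hn1
  have hn0 : 0 < n := by omega
  by_cases hS : ∃ p : Fin n → Prop, (∃ i, p i) ∧ (∃ i, ¬ p i) ∧ ∀ i j, p i → ¬ p j → A i j = 0
  · obtain ⟨p, hp, hq, hcl⟩ := hS
    haveI : DecidablePred p := Classical.decPred p
    have hclB : ∀ i j, p i → ¬ p j → B i j = 0 := fun i j hi hj => (hsign i j).mp (hcl i j hi hj)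
    exact iff_of_false (SRA.closed_not_P1 hA' p hp hq hcl) (SRA.closed_not_P1 hB' p hp hq hclB)
  · push_neg at hS
    have hirrA : MatIrred A := by
      intro i j
      by_cases hrow : ∃ k, 0 < A i k
      · obtain ⟨k, hk⟩ := hrow
        set Sr : Fin n → Prop := fun v => ∃ m : ℕ, 0 < m ∧ 0 < (A ^ m) i v with hSr
        have hSne : ∃ v, Sr v := ⟨k, 1, one_pos, by rw [pow_one]; exact hk⟩
        have hScl : ∀ u v, Sr u → 0 < A u v → Sr v := by
          rintro u v ⟨m, hm, hmu⟩ huv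
          refine ⟨m + 1, by omega, ?_⟩
          have h1 : (A ^ (m+1)) i v = ∑ l, (A ^ m) i l * A l v := by
            rw [pow_succ, Matrix.mul_apply]
          rw [h1]
          apply (SRA.sum_pos_iff fun l => mul_nonneg ((hA'.pow m) i l) (hA l v)).mpr
          exact ⟨u, mul_pos hmu huv⟩
        by_contra hj'
        have hjn : ¬ Sr j := hj'
        obtain ⟨u', v', hu', hv', huv'⟩ := hS Sr hSne ⟨j, hjn⟩
        exact hv' (hScl u' v' hu' (lt_of_le_of_ne (hA u' v') (Ne.symm huv')))
      · exfalso
        push_neg at hrow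
        have hcard : 1 < Fintype.card (Fin n) := by rw [Fintype.card_fin]; omega
        obtain ⟨j', hj'⟩ := Fintype.exists_ne_of_one_lt_card hcard i
        obtain ⟨u', v', hu', hv', huv'⟩ := hS (fun v => v = i) ⟨i, rfl⟩ ⟨j', hj'⟩
        apply huv'
        subst hu'
        exact le_antisymm (hrow v') (hA u' v')
    have hpat : ∀ i j, 0 < A i j ↔ 0 < B i j := by
      intro i j
      constructor
      · intro h
        rcases eq_or_lt_of_le (hB i j) with h' | h'
        · exfalso
          have : A i j = 0 := (hsign i j).mpr h'.symm
          rw [this] at h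
          exact lt_irrefl 0 h
        · exact h'
      · intro h
        rcases eq_or_lt_of_le (hA i j) with h' | h'
        · exfalso
          have : B i j = 0 := (hsign i j).mp h'.symm
          rw [this] at h
          exact lt_irrefl 0 h
        · exact h'
    have hirrB := SRA.matIrred_of_pattern hA' hB' hpat hirrA
    constructor
    · intro hPA
      by_contra hPB
      exact (SRA.transfer hn0 hA' hB' hpat hirrA hirrB hPB) hPA
    · intro hPB
      by_contra hPA
      exact (SRA.transfer hn0 hB' hA' (fun i j => (hpat i j).symm) hirrB hirrA hPA) hPB
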